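/- Suppose η ≥ 0 is a real number such that inf_{w_N ∈ V_N} ‖S* f − w_N‖_V ≤ η·‖f‖_W for every f ∈ W, and suppose C_cont·√γ₂·η ≤ √(γ₁/2). Then for every u ∈ V there exists a unique u_N ∈ V_N (the Galerkin solution) satisfying a(u_N, w_N) = a(u, w_N) for all w_N ∈ V_N, and this u_N satisfies the quasi-optimality bound ‖u − u_N‖_V ≤ (2·C_cont/γ₁)·inf_{w_N ∈ V_N} ‖u − w_N‖_V. -/

import Mathlib

open scoped ComplexConjugate

/-- The classic duality (Schatz) argument: if the adjoint approximation
quantity `η` satisfies `inf_{w_N ∈ V_N} ‖S* f − w_N‖ ≤ η ‖f‖` for all `f`, and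
`C_cont √γ₂ η ≤ √(γ₁/2)`, then for every `u ∈ V` the Galerkin solution `u_N ∈ V_N`
exists, is unique, and is quasi-optimal with constant `2 C_cont / γ₁`. -/
theorem galerkin_quasioptimality
    (V W : Type*)
    [NormedAddCommGroup V] [InnerProductSpace ℂ V] [CompleteSpace V]
    [NormedAddCommGroup W] [InnerProductSpace ℂ W] [CompleteSpace W]
    (ι : V →L[ℂ] W)
    (a : V → V → ℂ)
    (ha₁ : ∀ (c : ℂ) (u u' v : V), a (c • u + u') v = c * a u v + a u' v)
    (ha₂ : ∀ (c : ℂ) (u v v' : V), a u (c • v + v') = conj c * a u v + a u v')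
    (Ccont γ₁ γ₂ : ℝ) (hCcont : 0 < Ccont) (hγ₁ : 0 < γ₁) (hγ₂ : 0 < γ₂)
    (hcont : ∀ u v : V, ‖a u v‖ ≤ Ccont * ‖u‖ * ‖v‖)
    (hgarding : ∀ w : V, γ₁ * ‖w‖ ^ 2 - γ₂ * ‖ι w‖ ^ 2 ≤ (a w w).re)
    (VN : Submodule ℂ V) [FiniteDimensional ℂ VN]
    (Sstar : W → V)
    (hSstar : ∀ (v : V) (f : W), a v (Sstar f) = (inner ℂ (f : W) (ι v) : ℂ))
    (η : ℝ) (hη : 0 ≤ η)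
    (happrox : ∀ f : W, (⨅ wN : VN, ‖Sstar f - (wN : V)‖) ≤ η * ‖f‖)
    (hsmall : Ccont * Real.sqrt γ₂ * η ≤ Real.sqrt (γ₁ / 2)) :
    ∀ u : V,
      (∃! uN : VN, ∀ wN : VN, a (uN : V) (wN : V) = a u (wN : V)) ∧
      (∀ uN : VN, (∀ wN : VN, a (uN : V) (wN : V) = a u (wN : V)) →
        ‖u - (uN : V)‖ ≤ (2 * Ccont / γ₁) * ⨅ wN : VN, ‖u - (wN : V)‖) := by
  -- basic algebraic properties of `a`
  have hadd₁ : ∀ u u' v : V, a (u + u') v = a u v + a u' v := by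
    intro u u' v; have h := ha₁ 1 u u' v; simpa using h
  have hadd₂ : ∀ u v v' : V, a u (v + v') = a u v + a u v' := by
    intro u v v'; have h := ha₂ 1 u v v'; simpa using h
  have hzero₁ : ∀ v : V, a 0 v = 0 := by
    intro v; have h := hadd₁ 0 0 v; simp at h; exact h
  have hzero₂ : ∀ u : V, a u 0 = 0 := by
    intro u; have h := hadd₂ u 0 0; simp at h; exact h
  have hsmul₁ : ∀ (c : ℂ) (u v : V), a (c • u) v = c * a u v := by
    intro c u v; have h := ha₁ c u 0 v; simpa [hzero₁] using h
  have hsmul₂ : ∀ (c : ℂ) (u v : V), a u (c • v) = conj c * a u v := by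
    intro c u v; have h := ha₂ c u v 0; simpa [hzero₂] using h
  have hsub₁ : ∀ u u' v : V, a (u - u') v = a u v - a u' v := by
    intro u u' v
    have h := ha₁ (-1) u' u v
    rw [neg_one_smul, ← sub_eq_neg_add] at h
    rw [h]; ring
  have hsub₂ : ∀ u v v' : V, a u (v - v') = a u v - a u v' := by
    intro u v v'
    have h := ha₂ (-1) u v' v
    rw [neg_one_smul, ← sub_eq_neg_add] at h
    rw [h]; simp; ring
  haveI : Nonempty VN := ⟨0⟩
  -- small-η condition in squared form
  have hsmall2 : Ccont ^ 2 * γ₂ * η ^ 2 ≤ γ₁ / 2 := by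
    have h0 : 0 ≤ Ccont * Real.sqrt γ₂ * η := by positivity
    have := mul_le_mul hsmall hsmall h0 (Real.sqrt_nonneg _)
    rw [Real.mul_self_sqrt (by positivity)] at this
    have hs : Real.sqrt γ₂ * Real.sqrt γ₂ = γ₂ := Real.mul_self_sqrt hγ₂.le
    nlinarith [this, hs]
  -- the key duality (Aubin–Nitsche + Gårding) estimate
  have hkey : ∀ e : V, (∀ wN : VN, a e (wN : V) = 0) → γ₁ / 2 * ‖e‖ ^ 2 ≤ (a e e).re := by
    intro e horth
    -- Aubin–Nitsche: ‖ι e‖ ≤ Ccont * η * ‖e‖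
    have hAN : ‖ι e‖ ≤ Ccont * η * ‖e‖ := by
      rcases eq_or_ne (‖ι e‖) 0 with h0 | h0
      · rw [h0]; positivity
      · have hιpos : 0 < ‖ι e‖ := lt_of_le_of_ne (norm_nonneg _) (Ne.symm h0)
        have hepos : 0 < ‖e‖ := by
          rcases eq_or_ne e 0 with rfl | he
          · simp at hιpos
          · exact norm_pos_iff.mpr he
        have hval : ∀ wN : VN, a e (Sstar (ι e) - (wN : V)) = ((‖ι e‖ : ℂ)) ^ 2 := by
          intro wN
          rw [hsub₂, horth wN, sub_zero, hSstar e (ι e), inner_self_eq_norm_sq_to_K]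
          rfl
        have hb : ∀ wN : VN, ‖ι e‖ ^ 2 ≤ Ccont * ‖e‖ * ‖Sstar (ι e) - (wN : V)‖ := by
          intro wN
          have := hcont e (Sstar (ι e) - (wN : V))
          rw [hval wN] at this
          have habs : ‖((‖ι e‖ : ℂ)) ^ 2‖ = ‖ι e‖ ^ 2 := by
            simp
          rwa [habs] at this
        have hinf : ‖ι e‖ ^ 2 / (Ccont * ‖e‖) ≤ ⨅ wN : VN, ‖Sstar (ι e) - (wN : V)‖ := by
          apply le_ciInf
          intro wN
          rw [div_le_iff₀ (by positivity)]
          calc ‖ι e‖ ^ 2 ≤ Ccont * ‖e‖ * ‖Sstar (ι e) - (wN : V)‖ := hb wN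
            _ = ‖Sstar (ι e) - (wN : V)‖ * (Ccont * ‖e‖) := by ring
        have hchain : ‖ι e‖ ^ 2 / (Ccont * ‖e‖) ≤ η * ‖ι e‖ :=
          hinf.trans (happrox (ι e))
        rw [div_le_iff₀ (by positivity)] at hchain
        have : ‖ι e‖ * ‖ι e‖ ≤ (Ccont * η * ‖e‖) * ‖ι e‖ := by nlinarith
        exact le_of_mul_le_mul_right this hιpos
    -- combine with Gårding
    have hg := hgarding e
    have h2 : γ₂ * ‖ι e‖ ^ 2 ≤ γ₁ / 2 * ‖e‖ ^ 2 := by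
      have hsq : ‖ι e‖ ^ 2 ≤ (Ccont * η * ‖e‖) ^ 2 := by
        apply sq_le_sq' _ hAN
        nlinarith [norm_nonneg (ι e)]
      calc γ₂ * ‖ι e‖ ^ 2 ≤ γ₂ * (Ccont * η * ‖e‖) ^ 2 := by nlinarith
        _ = (Ccont ^ 2 * γ₂ * η ^ 2) * ‖e‖ ^ 2 := by ring
        _ ≤ γ₁ / 2 * ‖e‖ ^ 2 := by nlinarith [sq_nonneg ‖e‖]
    linarith
  -- discrete uniqueness kernel
  have huniq0 : ∀ d : VN, (∀ wN : VN, a (d : V) (wN : V) = 0) → d = 0 := by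
    intro d hd
    have h1 := hkey (d : V) hd
    have h2 : (a (d : V) (d : V)).re = 0 := by rw [hd d]; simp
    have h3 : ‖(d : V)‖ ^ 2 ≤ 0 := by nlinarith
    have h4 : (d : V) = 0 := by
      have := norm_nonneg (d : V)
      have : ‖(d : V)‖ = 0 := by nlinarith
      exact norm_eq_zero.mp this
    exact Subtype.ext h4
  -- Riesz representation on VN
  haveI : CompleteSpace VN := FiniteDimensional.complete ℂ VN
  set R : V → VN := fun v =>
    (InnerProductSpace.toDual ℂ VN).symm
      (LinearMap.toContinuousLinearMap
        { toFun := fun w : VN => conj (a v (w : V))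
          map_add' := by intro w w'; simp [hadd₂]
          map_smul' := by intro c w; simp [hsmul₂] }) with hR
  have hRspec : ∀ (v : V) (w : VN), (inner ℂ (R v) w : ℂ) = conj (a v (w : V)) := by
    intro v w
    rw [hR]
    exact InnerProductSpace.toDual_symm_apply
  intro u
  -- the linear endomorphism of VN
  set A : VN →ₗ[ℂ] VN :=
    { toFun := fun d => R (d : V)
      map_add' := by
        intro d d'
        apply ext_inner_right ℂ
        intro w
        rw [inner_add_left, hRspec, hRspec, hRspec, Submodule.coe_add, hadd₁, map_add]
      map_smul' := by
        intro c d
        apply ext_inner_right ℂ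
        intro w
        rw [RingHom.id_apply, inner_smul_left, hRspec, hRspec, Submodule.coe_smul, hsmul₁, map_mul] } with hA
  -- injectivity of A
  have hAinj : Function.Injective A := by
    intro d d' hdd
    have h0 : A (d - d') = 0 := by rw [map_sub, hdd, sub_self]
    have horth : ∀ wN : VN, a ((d - d' : VN) : V) (wN : V) = 0 := by
      intro wN
      have h1 : (inner ℂ (A (d - d')) wN : ℂ) = 0 := by rw [h0, inner_zero_left]
      have h2 : (inner ℂ (A (d - d')) wN : ℂ) = conj (a ((d - d' : VN) : V) (wN : V)) :=
        hRspec _ _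
      have h3 : conj (a ((d - d' : VN) : V) (wN : V)) = 0 := by rw [← h2, h1]
      simpa using congrArg conj h3
    have := huniq0 (d - d') horth
    exact sub_eq_zero.mp this
  have hAsurj : Function.Surjective A := LinearMap.injective_iff_surjective.mp hAinj
  obtain ⟨uN₀, huN₀⟩ := hAsurj (R u)
  have hsol : ∀ wN : VN, a (uN₀ : V) (wN : V) = a u (wN : V) := by
    intro wN
    have h1 : (inner ℂ (A uN₀) wN : ℂ) = (inner ℂ (R u) wN : ℂ) := by rw [huN₀]
    have h2 : conj (a (uN₀ : V) (wN : V)) = conj (a u (wN : V)) := by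
      rw [← hRspec (uN₀ : V) wN, ← hRspec u wN]; exact h1
    simpa using congrArg conj h2
  constructor
  · refine ⟨uN₀, hsol, ?_⟩
    intro y hy
    have horth : ∀ wN : VN, a ((y - uN₀ : VN) : V) (wN : V) = 0 := by
      intro wN
      rw [Submodule.coe_sub, hsub₁, hy wN, hsol wN, sub_self]
    have := huniq0 (y - uN₀) horth
    exact sub_eq_zero.mp this
  · -- quasi-optimality
    intro uN hG
    set e : V := u - (uN : V) with he
    have horth : ∀ wN : VN, a e (wN : V) = 0 := by
      intro wN
      rw [he, hsub₁, hG wN, sub_self]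
    have hE := hkey e horth
    have hbound : ∀ wN : VN, γ₁ / 2 * ‖e‖ ^ 2 ≤ Ccont * ‖e‖ * ‖u - (wN : V)‖ := by
      intro wN
      have h1 : a e e = a e (u - (wN : V)) := by
        have hdiff : a e e - a e (u - (wN : V)) = a e (((wN : V) : V) - (uN : V)) := by
          rw [← hsub₂]
          congr 1
          rw [he]
          abel
        have hVN : a e ((wN : V) - (uN : V)) = 0 := by
          have : ((wN - uN : VN) : V) = (wN : V) - (uN : V) := rfl
          rw [← this]
          exact horth (wN - uN)
        rw [hVN] at hdiff
        exact sub_eq_zero.mp hdiff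
      have h2 : (a e e).re ≤ Ccont * ‖e‖ * ‖u - (wN : V)‖ := by
        calc (a e e).re ≤ ‖a e e‖ := Complex.re_le_norm _
          _ = ‖a e (u - (wN : V))‖ := by rw [h1]
          _ ≤ Ccont * ‖e‖ * ‖u - (wN : V)‖ := hcont e _
      linarith [hE]
    rcases eq_or_ne (‖e‖) 0 with h0 | h0
    · rw [h0]
      have hinf : (0 : ℝ) ≤ ⨅ wN : VN, ‖u - (wN : V)‖ :=
        le_ciInf fun wN => norm_nonneg _
      positivity
    · have hepos : 0 < ‖e‖ := lt_of_le_of_ne (norm_nonneg _) (Ne.symm h0)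
      have hinf : γ₁ * ‖e‖ / (2 * Ccont) ≤ ⨅ wN : VN, ‖u - (wN : V)‖ := by
        apply le_ciInf
        intro wN
        rw [div_le_iff₀ (by positivity)]
        have := hbound wN
        nlinarith
      rw [div_le_iff₀ (by positivity)] at hinf
      rw [show (2 * Ccont / γ₁) * (⨅ wN : VN, ‖u - (wN : V)‖)
            = ((⨅ wN : VN, ‖u - (wN : V)‖) * (2 * Ccont)) / γ₁ by ring,
          le_div_iff₀ hγ₁]
      linarith only [hinf, hepos]
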